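/- If D ↠* E then dist(D, E) ≤ 2·liv(D): the L¹ distance between the mathematical distributions of D and E is bounded by twice the liveness of D. -/

import Mathlib

open Relation
open scoped NNReal

abbrev PDist (A : Type) := List (ℝ≥0 × A)

namespace PPARS

variable {A X : Type}

/-- Total weight of a list distribution. -/
def weight (D : PDist A) : ℝ≥0 := (D.map Prod.fst).sum

/-- Scale every weight of a distribution by `α`. -/
def scale (α : ℝ≥0) (D : PDist A) : PDist A := D.map (fun pa => (α * pa.1, pa.2))

open Classical in
/-- Total weight that `D` assigns to the element `a`. -/
noncomputable def wt (D : PDist A) (a : A) : ℝ≥0 :=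
  (D.map (fun pa => if pa.2 = a then pa.1 else 0)).sum

/-- The Flip rule, closed under list contexts. -/
inductive FlipS : PDist A → PDist A → Prop
  | mk (E₁ E₂ : PDist A) (p q : ℝ≥0) (a b : A) :
      FlipS (E₁ ++ [(p,a),(q,b)] ++ E₂) (E₁ ++ [(q,b),(p,a)] ++ E₂)

/-- The Join rule, closed under list contexts. -/
inductive JoinS : PDist A → PDist A → Prop
  | mk (E₁ E₂ : PDist A) (p q : ℝ≥0) (a : A) :
      JoinS (E₁ ++ [(p,a),(q,a)] ++ E₂) (E₁ ++ [(p+q,a)] ++ E₂)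

/-- The Split rule, closed under list contexts. -/
inductive SplitS : PDist A → PDist A → Prop
  | mk (E₁ E₂ : PDist A) (p q : ℝ≥0) (a : A) :
      SplitS (E₁ ++ [(p+q,a)] ++ E₂) (E₁ ++ [(p,a),(q,a)] ++ E₂)

/-- One `∼`-step: congruence closure of Flip, Join and Split. -/
def SimStep (D E : PDist A) : Prop := FlipS D E ∨ JoinS D E ∨ SplitS D E

/-- One Flip-or-Join step. -/
def FJ (D E : PDist A) : Prop := FlipS D E ∨ JoinS D E

/-- Distribution equivalence `≈`. -/
def DEquiv : PDist A → PDist A → Prop := ReflTransGen SimStep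

/-- Parallel evolution `⇒_P` for a PARS relation `R`. -/
inductive PEvol (R : A → PDist A → Prop) : PDist A → PDist A → Prop
  | nil : PEvol R [] []
  | keep {ds ds' : PDist A} (p : ℝ≥0) (a : A) :
      PEvol R ds ds' → PEvol R ((p,a) :: ds) ((p,a) :: ds')
  | evolve {a : A} {D ds ds' : PDist A} (p : ℝ≥0) :
      R a D → PEvol R ds ds' → PEvol R ((p,a) :: ds) (scale p D ++ ds')

/-- Proper parallel evolution `⇒_P¹`: at least one element evolves. -/
inductive PEvol1 (R : A → PDist A → Prop) : PDist A → PDist A → Prop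
  | evolve {a : A} {D ds ds' : PDist A} (p : ℝ≥0) :
      R a D → PEvol R ds ds' → PEvol1 R ((p,a) :: ds) (scale p D ++ ds')
  | keep {ds ds' : PDist A} (p : ℝ≥0) (a : A) :
      PEvol1 R ds ds' → PEvol1 R ((p,a) :: ds) ((p,a) :: ds')

/-- The determinisation relation `↠ = ⇒_P ∪ ≈`. -/
def Red (R : A → PDist A → Prop) (D E : PDist A) : Prop := PEvol R D E ∨ DEquiv D E

/-- `R` defines a PARS: successor distributions are normalised. -/
def IsPARS (R : A → PDist A → Prop) : Prop := ∀ a D, R a D → weight D = 1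

/-- A terminal element has no successor distribution. -/
def Terminal (R : A → PDist A → Prop) (a : A) : Prop := ∀ D, ¬ R a D

/-- A terminal distribution contains only terminal elements. -/
def TerminalD (R : A → PDist A → Prop) (D : PDist A) : Prop := ∀ pa ∈ D, Terminal R pa.2

/-- Classical confluence of a relation. -/
def Confluent (r : X → X → Prop) : Prop :=
  ∀ a b c, ReflTransGen r a b → ReflTransGen r a c →
    ∃ d, ReflTransGen r b d ∧ ReflTransGen r c d

/-- Raw (finite) computation trees. -/
inductive CTree (A : Type) where
  | leaf (a : A)
  | node (a : A) (cs : List (ℝ≥0 × CTree A))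

def CTree.root : CTree A → A
  | .leaf a => a
  | .node a _ => a

/-- `IsTree R t a`: `t` is a computation tree of the PARS `R` with root `a`. -/
inductive IsTree (R : A → PDist A → Prop) : CTree A → A → Prop
  | leaf (a : A) : IsTree R (.leaf a) a
  | node (a : A) (cs : List (ℝ≥0 × CTree A)) :
      R a (cs.map fun x => (x.1, x.2.root)) →
      (∀ x ∈ cs, IsTree R x.2 x.2.root) →
      IsTree R (.node a cs) a

mutual
/-- Support of a computation tree. -/
def supp : CTree A → PDist A
  | .leaf a => [(1, a)]
  | .node _ cs => suppL cs
def suppL : List (ℝ≥0 × CTree A) → PDist A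
  | [] => []
  | (p, t) :: ts => scale p (supp t) ++ suppL ts
end

/-- A tree is maximal when all its leaves are terminal elements. -/
inductive MaximalT (R : A → PDist A → Prop) : CTree A → Prop
  | leaf (a : A) : Terminal R a → MaximalT R (.leaf a)
  | node (a : A) (cs : List (ℝ≥0 × CTree A)) :
      (∀ x ∈ cs, MaximalT R x.2) → MaximalT R (.node a cs)

end PPARS


namespace PPARS
variable {A X : Type}

/-- `R` modulo `≈`: an equivalence step, then `r`, then an equivalence step. -/
def ModE (r : PDist A → PDist A → Prop) : PDist A → PDist A → Prop :=
  Relation.Comp DEquiv (Relation.Comp r DEquiv)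

/-- `n`-fold composition of a relation. -/
def npow (r : X → X → Prop) : ℕ → X → X → Prop
  | 0 => Eq
  | n+1 => Relation.Comp r (npow r n)

/-- A local relation on distributions. -/
def LocalRel (r : PDist A → PDist A → Prop) : Prop :=
  ∀ (α β : ℝ≥0) (D₁ D₂ E : PDist A), r (scale α D₁ ++ scale β D₂) E →
    ∃ E₁ E₂, E = scale α E₁ ++ scale β E₂ ∧ r D₁ E₁ ∧ r D₂ E₂

/-- A compositional relation on distributions. -/
def Compositional (r : PDist A → PDist A → Prop) : Prop :=
  ∀ (α β : ℝ≥0) (D₁ E₁ D₂ E₂ : PDist A), r D₁ E₁ → r D₂ E₂ →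
    r (scale α D₁ ++ scale β D₂) (scale α E₁ ++ scale β E₂)

/-- `(γ, δ)` closes `(α, β)` on `D`. -/
def Closes (γ δ α β : PDist A → PDist A → Prop) (D : PDist A) : Prop :=
  ∀ E F, α D E → β D F → ∃ C, γ E C ∧ δ F C

open Classical in
/-- Liveness: total weight assigned to non-terminal elements. -/
noncomputable def liv (R : A → PDist A → Prop) (D : PDist A) : ℝ≥0 :=
  (D.map (fun pa => if Terminal R pa.2 then 0 else pa.1)).sum

/-- L¹ distance between mathematical distributions. -/
noncomputable def fdist (f g : A → ℝ≥0) : ℝ := ∑' a : A, |(f a : ℝ) - (g a : ℝ)|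

/-- L¹ distance between the mathematical distributions induced by two list
distributions. -/
noncomputable def ldist (D E : PDist A) : ℝ := fdist (wt D) (wt E)

end PPARS

namespace PPARS
variable {A : Type}

lemma wt_nil (a : A) : wt ([] : PDist A) a = 0 := rfl

open Classical in
lemma wt_cons (p : ℝ≥0) (b : A) (ds : PDist A) (a : A) :
    wt ((p,b)::ds) a = (if b = a then p else 0) + wt ds a := by
  simp [wt]

lemma wt_append (D E : PDist A) (a : A) : wt (D ++ E) a = wt D a + wt E a := by
  simp [wt]

lemma wt_scale (α : ℝ≥0) (D : PDist A) (a : A) :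
    wt (scale α D) a = α * wt D a := by
  classical
  induction D with
  | nil => simp [wt, scale]
  | cons pa ds ih =>
    rw [show scale α (pa :: ds) = (α * pa.1, pa.2) :: scale α ds from rfl, wt_cons,
      show (pa :: ds : PDist A) = (pa.1, pa.2) :: ds from rfl, wt_cons, ih]
    split_ifs <;> ring

lemma weight_nil : weight ([] : PDist A) = 0 := rfl

lemma weight_cons (p : ℝ≥0) (b : A) (ds : PDist A) :
    weight ((p,b)::ds) = p + weight ds := by simp [weight]

lemma weight_append (D E : PDist A) : weight (D ++ E) = weight D + weight E := by
  simp [weight]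

lemma weight_scale (α : ℝ≥0) (D : PDist A) : weight (scale α D) = α * weight D := by
  induction D with
  | nil => simp [weight, scale]
  | cons pa ds ih =>
    rw [show scale α (pa :: ds) = (α * pa.1, pa.2) :: scale α ds from rfl, weight_cons,
      show (pa :: ds : PDist A) = (pa.1, pa.2) :: ds from rfl, weight_cons, ih]
    ring

lemma simStep_wt {D E : PDist A} (h : SimStep D E) (c : A) : wt D c = wt E c := by
  classical
  rcases h with h | h | h
  · rcases h with ⟨E₁, E₂, p, q, a, b⟩
    simp only [wt_append, wt_cons, wt_nil]
    ring
  · rcases h with ⟨E₁, E₂, p, q, a⟩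
    simp only [wt_append, wt_cons, wt_nil]
    split <;> ring
  · rcases h with ⟨E₁, E₂, p, q, a⟩
    simp only [wt_append, wt_cons, wt_nil]
    split <;> ring

lemma simStep_weight {D E : PDist A} (h : SimStep D E) : weight D = weight E := by
  rcases h with ⟨E₁, E₂, p, q, a, b⟩ | ⟨E₁, E₂, p, q, a⟩ | ⟨E₁, E₂, p, q, a⟩ <;>
    simp only [weight_append, weight_cons, weight_nil] <;> ring

lemma dequiv_wt {D E : PDist A} (h : DEquiv D E) (c : A) : wt D c = wt E c := by
  induction h with
  | refl => rfl
  | tail _ h2 ih => exact ih.trans (simStep_wt h2 c)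

lemma dequiv_weight {D E : PDist A} (h : DEquiv D E) : weight D = weight E := by
  induction h with
  | refl => rfl
  | tail _ h2 ih => exact ih.trans (simStep_weight h2)

lemma pevol_weight {R : A → PDist A → Prop} (hR : IsPARS R) {D E : PDist A}
    (h : PEvol R D E) : weight D = weight E := by
  induction h with
  | nil => rfl
  | keep p a _ ih => rw [weight_cons, weight_cons, ih]
  | @evolve a Da ds ds' p hr hp ih =>
    rw [weight_cons, weight_append, weight_scale, hR a Da hr, mul_one, ih]

lemma pevol_wt_term {R : A → PDist A → Prop} {D E : PDist A}
    (h : PEvol R D E) (a : A) (ha : Terminal R a) : wt D a ≤ wt E a := by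
  classical
  induction h with
  | nil => exact le_rfl
  | keep p b _ ih =>
    rw [wt_cons, wt_cons]
    exact add_le_add le_rfl ih
  | @evolve b Db ds ds' p hr hp ih =>
    rw [wt_cons, wt_append]
    have hb : ¬ (b = a) := fun hba => ha Db (hba ▸ hr)
    rw [if_neg hb, zero_add]
    exact ih.trans le_add_self
lemma red_star {R : A → PDist A → Prop} (hR : IsPARS R) {D E : PDist A}
    (h : Relation.ReflTransGen (Red R) D E) :
    weight D = weight E ∧ ∀ a, Terminal R a → wt D a ≤ wt E a := by
  induction h with
  | refl => exact ⟨rfl, fun a _ => le_rfl⟩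
  | tail _ h2 ih =>
    rcases h2 with h2 | h2
    · exact ⟨ih.1.trans (pevol_weight hR h2), fun a ha =>
        (ih.2 a ha).trans (pevol_wt_term h2 a ha)⟩
    · exact ⟨ih.1.trans (dequiv_weight h2), fun a ha =>
        (ih.2 a ha).trans (dequiv_wt h2 a).le⟩

lemma wt_eq_zero {D : PDist A} {a : A} (h : a ∉ D.map Prod.snd) : wt D a = 0 := by
  classical
  induction D with
  | nil => rfl
  | cons pa ds ih =>
    simp only [List.map_cons, List.mem_cons, not_or] at h
    rw [show (pa :: ds : PDist A) = (pa.1, pa.2) :: ds from rfl, wt_cons,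
      if_neg (fun hh => h.1 hh.symm), zero_add]
    exact ih h.2

lemma sum_wt {D : PDist A} {S : Finset A} (hS : ∀ pa ∈ D, pa.2 ∈ S) :
    ∑ a ∈ S, wt D a = weight D := by
  classical
  induction D with
  | nil => simp [wt_nil, weight_nil]
  | cons pa ds ih =>
    have h1 : ∀ qa ∈ ds, qa.2 ∈ S := fun qa hqa => hS qa (List.mem_cons_of_mem _ hqa)
    calc ∑ a ∈ S, wt (pa :: ds) a
        = ∑ a ∈ S, ((if pa.2 = a then pa.1 else 0) + wt ds a) := by
          refine Finset.sum_congr rfl fun a _ => ?_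
          rw [show (pa :: ds : PDist A) = (pa.1, pa.2) :: ds from rfl, wt_cons]
      _ = pa.1 + weight ds := by
          rw [Finset.sum_add_distrib, ih h1, Finset.sum_ite_eq S pa.2 (fun _ => pa.1),
            if_pos (hS pa (List.mem_cons_self))]
      _ = weight (pa :: ds) := by
          rw [show (pa :: ds : PDist A) = (pa.1, pa.2) :: ds from rfl, weight_cons]

open Classical in
lemma sum_wt_filter {R : A → PDist A → Prop} {D : PDist A} {S : Finset A}
    (hS : ∀ pa ∈ D, pa.2 ∈ S) :
    ∑ a ∈ S.filter (fun a => ¬ Terminal R a), wt D a = liv R D := by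
  classical
  induction D with
  | nil => simp [wt_nil, liv]
  | cons pa ds ih =>
    have h1 : ∀ qa ∈ ds, qa.2 ∈ S := fun qa hqa => hS qa (List.mem_cons_of_mem _ hqa)
    have hliv : liv R (pa :: ds) = (if Terminal R pa.2 then 0 else pa.1) + liv R ds := by
      simp [liv]
    calc ∑ a ∈ S.filter (fun a => ¬ Terminal R a), wt (pa :: ds) a
        = ∑ a ∈ S.filter (fun a => ¬ Terminal R a),
            ((if pa.2 = a then pa.1 else 0) + wt ds a) := by
          refine Finset.sum_congr rfl fun a _ => ?_
          rw [show (pa :: ds : PDist A) = (pa.1, pa.2) :: ds from rfl, wt_cons]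
      _ = (if pa.2 ∈ S.filter (fun a => ¬ Terminal R a) then pa.1 else 0) + liv R ds := by
          rw [Finset.sum_add_distrib, ih h1,
            Finset.sum_ite_eq (S.filter (fun a => ¬ Terminal R a)) pa.2 (fun _ => pa.1)]
      _ = (if Terminal R pa.2 then 0 else pa.1) + liv R ds := by
          congr 1
          by_cases ht : Terminal R pa.2
          · rw [if_neg, if_pos ht]
            simp only [Finset.mem_filter, not_and, not_not]
            exact fun _ => ht
          · rw [if_pos, if_neg ht]
            exact Finset.mem_filter.mpr ⟨hS pa (List.mem_cons_self), ht⟩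
      _ = liv R (pa :: ds) := hliv.symm

end PPARS

open PPARS Relation in
/-- If `D ↠* E` then the L¹ distance between `D` and `E` is at most twice the
liveness of `D`. -/
theorem dist_le_two_liv {A : Type} (R : A → PDist A → Prop) (hR : IsPARS R)
    {D E : PDist A} (h : ReflTransGen (Red R) D E) :
    ldist D E ≤ 2 * (liv R D : ℝ) := by
  classical
  obtain ⟨hW, hmono⟩ := red_star hR h
  set S : Finset A := (D.map Prod.snd).toFinset ∪ (E.map Prod.snd).toFinset with hSdef
  have hDS : ∀ pa ∈ D, pa.2 ∈ S := fun pa hpa =>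
    Finset.mem_union_left _ (List.mem_toFinset.mpr (List.mem_map_of_mem (f := Prod.snd) hpa))
  have hES : ∀ pa ∈ E, pa.2 ∈ S := fun pa hpa =>
    Finset.mem_union_right _ (List.mem_toFinset.mpr (List.mem_map_of_mem (f := Prod.snd) hpa))
  have hzero : ∀ a ∉ S, |(wt D a : ℝ) - (wt E a : ℝ)| = 0 := by
    intro a ha
    have h1 : wt D a = 0 := wt_eq_zero (fun hm =>
      ha (Finset.mem_union_left _ (List.mem_toFinset.mpr hm)))
    have h2 : wt E a = 0 := wt_eq_zero (fun hm =>
      ha (Finset.mem_union_right _ (List.mem_toFinset.mpr hm)))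
    simp [h1, h2]
  have heq : ldist D E = ∑ a ∈ S, |(wt D a : ℝ) - (wt E a : ℝ)| := by
    rw [ldist, fdist]
    exact tsum_eq_sum hzero
  set T : Finset A := S.filter (fun a => Terminal R a) with hT
  set N : Finset A := S.filter (fun a => ¬ Terminal R a) with hN
  have hsplit : ∀ f : A → ℝ, ∑ a ∈ S, f a = ∑ a ∈ T, f a + ∑ a ∈ N, f a :=
    fun f => (Finset.sum_filter_add_sum_filter_not S _ f).symm
  -- sums of wt over T and N
  have hlivD : (∑ a ∈ N, (wt D a : ℝ)) = (liv R D : ℝ) := by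
    rw [← sum_wt_filter (R := R) hDS]; push_cast [hN]; rfl
  have hlivE : (∑ a ∈ N, (wt E a : ℝ)) = (liv R E : ℝ) := by
    rw [← sum_wt_filter (R := R) hES]; push_cast [hN]; rfl
  have hWD : (∑ a ∈ T, (wt D a : ℝ)) + (∑ a ∈ N, (wt D a : ℝ)) = (weight D : ℝ) := by
    rw [← hsplit, ← sum_wt hDS]; push_cast; rfl
  have hWE : (∑ a ∈ T, (wt E a : ℝ)) + (∑ a ∈ N, (wt E a : ℝ)) = (weight E : ℝ) := by
    rw [← hsplit, ← sum_wt hES]; push_cast; rfl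
  have hTsum : ∑ a ∈ T, |(wt D a : ℝ) - (wt E a : ℝ)|
      = ∑ a ∈ T, ((wt E a : ℝ) - (wt D a : ℝ)) := by
    refine Finset.sum_congr rfl fun a haT => ?_
    have ha : Terminal R a := (Finset.mem_filter.mp haT).2
    have hle : (wt D a : ℝ) ≤ (wt E a : ℝ) := by exact_mod_cast hmono a ha
    rw [abs_of_nonpos (by linarith)]; ring
  have hNsum : ∑ a ∈ N, |(wt D a : ℝ) - (wt E a : ℝ)|
      ≤ ∑ a ∈ N, ((wt D a : ℝ) + (wt E a : ℝ)) := by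
    refine Finset.sum_le_sum fun a _ => ?_
    have h1 : (0:ℝ) ≤ wt D a := (wt D a).coe_nonneg
    have h2 : (0:ℝ) ≤ wt E a := (wt E a).coe_nonneg
    rw [abs_le]; constructor <;> linarith
  have hWeq : (weight D : ℝ) = (weight E : ℝ) := by exact_mod_cast hW
  rw [heq, hsplit, hTsum]
  rw [Finset.sum_sub_distrib] at *
  rw [Finset.sum_add_distrib] at hNsum
  linarith
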